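/- arXiv:2210.12208 — 3 statements merged into one kernel-verified Lean document; each statement's English description precedes it below -/
import Mathlib

section
/- Let a and t be real numbers with 0 < a < t, and set x := (t - a)/2. Then ∫_a^t (1 + (t-s)^{-3/4}) * (s-a)^{-3/8} ds ≤ (13/5) * x^{5/8} + (28/5) * x^{-1/8}. -/
open MeasureTheory intervalIntegral

/-- Midpoint-splitting integral estimate: for `0 < a < t` and `x := (t-a)/2`,
`∫_a^t (1 + (t-s)^(-3/4)) (s-a)^(-3/8) ds ≤ (13/5) x^(5/8) + (28/5) x^(-1/8)`. -/
theorem midpoint_splitting_integral (a t : ℝ) (ha : 0 < a) (hat : a < t) :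
    ∫ s in Set.Ioo a t, (1 + (t - s) ^ (-(3 : ℝ) / 4)) * (s - a) ^ (-(3 : ℝ) / 8)
      ≤ (13 / 5) * ((t - a) / 2) ^ ((5 : ℝ) / 8)
        + (28 / 5) * ((t - a) / 2) ^ (-(1 : ℝ) / 8) := by
  set x : ℝ := (t - a) / 2 with hxdef
  set m : ℝ := (a + t) / 2 with hmdef
  have hx : 0 < x := by rw [hxdef]; linarith
  have ham : a < m := by rw [hmdef]; linarith
  have hmt : m < t := by rw [hmdef]; linarith
  have hma : m - a = x := by rw [hmdef, hxdef]; ring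
  have htm : t - m = x := by rw [hmdef, hxdef]; ring
  -- integrability of singular factors
  have hint1 : IntervalIntegrable (fun s => (s - a) ^ (-(3 : ℝ) / 8)) volume a m := by
    have h := (intervalIntegrable_rpow' (a := a - a) (b := m - a)
      (r := -(3 : ℝ) / 8) (by norm_num)).comp_sub_right a
    simpa using h
  have hint2 : IntervalIntegrable (fun s => (t - s) ^ (-(3 : ℝ) / 4)) volume m t := by
    have h := (intervalIntegrable_rpow' (a := t - m) (b := t - t)
      (r := -(3 : ℝ) / 4) (by norm_num)).comp_sub_left t
    simpa using h
  -- continuity of nonsingular factors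
  have hcont1 : ContinuousOn (fun s : ℝ => 1 + (t - s) ^ (-(3 : ℝ) / 4)) (Set.uIcc a m) := by
    apply continuousOn_const.add
    apply ContinuousOn.rpow_const (by fun_prop)
    intro s hs
    rw [Set.uIcc_of_le ham.le] at hs
    left
    have hsm : s ≤ m := hs.2
    have hst : s < t := lt_of_le_of_lt hsm hmt
    intro h; nlinarith [sub_pos.mpr hst]
  have hcont2 : ContinuousOn (fun s : ℝ => (s - a) ^ (-(3 : ℝ) / 8)) (Set.uIcc m t) := by
    apply ContinuousOn.rpow_const (by fun_prop)
    intro s hs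
    rw [Set.uIcc_of_le hmt.le] at hs
    left
    have has : a < s := lt_of_lt_of_le ham hs.1
    intro h; nlinarith [sub_pos.mpr has]
  -- integrability of the integrand on each half
  have hf1 : IntervalIntegrable
      (fun s => (1 + (t - s) ^ (-(3 : ℝ) / 4)) * (s - a) ^ (-(3 : ℝ) / 8)) volume a m :=
    hint1.continuousOn_mul hcont1
  have hf2 : IntervalIntegrable
      (fun s => (1 + (t - s) ^ (-(3 : ℝ) / 4)) * (s - a) ^ (-(3 : ℝ) / 8)) volume m t :=
    (intervalIntegrable_const.add hint2).mul_continuousOn hcont2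
  -- explicit integrals
  have hI1 : (∫ s in a..m, (s - a) ^ (-(3 : ℝ) / 8)) = (8 / 5) * x ^ ((5 : ℝ) / 8) := by
    rw [integral_comp_sub_right (fun u => u ^ (-(3 : ℝ) / 8)) a, sub_self, hma,
      integral_rpow (Or.inl (by norm_num))]
    rw [Real.zero_rpow (by norm_num)]
    norm_num
    ring
  have hI2 : (∫ s in m..t, (t - s) ^ (-(3 : ℝ) / 4)) = 4 * x ^ ((1 : ℝ) / 4) := by
    rw [integral_comp_sub_left (fun u => u ^ (-(3 : ℝ) / 4)) t, sub_self, htm,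
      integral_rpow (Or.inl (by norm_num))]
    rw [Real.zero_rpow (by norm_num)]
    norm_num
    ring
  -- power arithmetic
  have hxx1 : x ^ (-(3 : ℝ) / 4) * x ^ ((5 : ℝ) / 8) = x ^ (-(1 : ℝ) / 8) := by
    rw [← Real.rpow_add hx]; norm_num
  have hxx2 : x * x ^ (-(3 : ℝ) / 8) = x ^ ((5 : ℝ) / 8) := by
    nth_rewrite 1 [← Real.rpow_one x]
    rw [← Real.rpow_add hx]; norm_num
  have hxx3 : x ^ ((1 : ℝ) / 4) * x ^ (-(3 : ℝ) / 8) = x ^ (-(1 : ℝ) / 8) := by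
    rw [← Real.rpow_add hx]; norm_num
  -- bound on the first half
  have hB1 : (∫ s in a..m, (1 + (t - s) ^ (-(3 : ℝ) / 4)) * (s - a) ^ (-(3 : ℝ) / 8))
      ≤ (8 / 5) * x ^ ((5 : ℝ) / 8) + (8 / 5) * x ^ (-(1 : ℝ) / 8) := by
    have hmono : (∫ s in a..m, (1 + (t - s) ^ (-(3 : ℝ) / 4)) * (s - a) ^ (-(3 : ℝ) / 8))
        ≤ ∫ s in a..m, (1 + x ^ (-(3 : ℝ) / 4)) * (s - a) ^ (-(3 : ℝ) / 8) := by
      apply integral_mono_on ham.le hf1 (hint1.const_mul _)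
      intro s hs
      apply mul_le_mul_of_nonneg_right _ (Real.rpow_nonneg (by linarith [hs.1]) _)
      have h1 : x ≤ t - s := by have := hs.2; linarith [htm]
      have := Real.rpow_le_rpow_of_nonpos hx h1 (by norm_num : -(3 : ℝ)/4 ≤ 0)
      linarith
    rw [intervalIntegral.integral_const_mul, hI1] at hmono
    calc _ ≤ (1 + x ^ (-(3 : ℝ) / 4)) * ((8 / 5) * x ^ ((5 : ℝ) / 8)) := hmono
      _ = (8 / 5) * x ^ ((5 : ℝ) / 8) + (8 / 5) * x ^ (-(1 : ℝ) / 8) := by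
        rw [← hxx1]; ring
  -- bound on the second half
  have hB2 : (∫ s in m..t, (1 + (t - s) ^ (-(3 : ℝ) / 4)) * (s - a) ^ (-(3 : ℝ) / 8))
      ≤ x ^ ((5 : ℝ) / 8) + 4 * x ^ (-(1 : ℝ) / 8) := by
    have hmono : (∫ s in m..t, (1 + (t - s) ^ (-(3 : ℝ) / 4)) * (s - a) ^ (-(3 : ℝ) / 8))
        ≤ ∫ s in m..t, (1 + (t - s) ^ (-(3 : ℝ) / 4)) * x ^ (-(3 : ℝ) / 8) := by
      apply integral_mono_on hmt.le hf2
        ((intervalIntegrable_const.add hint2).mul_const _)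
      intro s hs
      have hpos : (0 : ℝ) ≤ 1 + (t - s) ^ (-(3 : ℝ) / 4) := by
        have := Real.rpow_nonneg (show (0:ℝ) ≤ t - s by linarith [hs.2]) (-(3 : ℝ) / 4)
        linarith
      apply mul_le_mul_of_nonneg_left _ hpos
      have h1 : x ≤ s - a := by have := hs.1; linarith [hma]
      exact Real.rpow_le_rpow_of_nonpos hx h1 (by norm_num)
    have hone : (∫ _ in m..t, (1 : ℝ)) = t - m := by simp
    rw [intervalIntegral.integral_mul_const,
      intervalIntegral.integral_add intervalIntegrable_const hint2,
      hone, hI2] at hmono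
    calc _ ≤ ((t - m) + 4 * x ^ ((1 : ℝ) / 4)) * x ^ (-(3 : ℝ) / 8) := hmono
      _ = x ^ ((5 : ℝ) / 8) + 4 * x ^ (-(1 : ℝ) / 8) := by
        rw [htm, ← hxx2, ← hxx3]; ring
  -- combine
  have hsplit : (∫ s in Set.Ioo a t, (1 + (t - s) ^ (-(3 : ℝ) / 4)) * (s - a) ^ (-(3 : ℝ) / 8))
      = (∫ s in a..m, (1 + (t - s) ^ (-(3 : ℝ) / 4)) * (s - a) ^ (-(3 : ℝ) / 8))
        + ∫ s in m..t, (1 + (t - s) ^ (-(3 : ℝ) / 4)) * (s - a) ^ (-(3 : ℝ) / 8) := by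
    rw [integral_add_adjacent_intervals hf1 hf2,
      integral_of_le (ham.le.trans hmt.le),
      MeasureTheory.integral_Ioc_eq_integral_Ioo]
  rw [hsplit]
  linarith [hB1, hB2]
end

section
/- Let t₀ and t₁ be real numbers with 0 < t₀ < t₁, and let t ∈ (t₀/2, t₁). Then (t - t₀/2)^{1/2} * ∫_{t₀/2}^t (1 + (t-s)^{-3/4}) * (s - t₀/2)^{-3/8} ds ≤ √2 * ( (13/5) * (t₁/2 - t₀/4)^{9/8} + (28/5) * (t₁/2 - t₀/4)^{3/8} ). -/
open MeasureTheory

/-- Uniform weighted integral bound: for `0 < t₀ < t₁` and `t ∈ (t₀/2, t₁)`,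
`(t - t₀/2)^(1/2) ∫_{t₀/2}^t (1 + (t-s)^(-3/4)) (s - t₀/2)^(-3/8) ds
  ≤ √2 ((13/5)(t₁/2 - t₀/4)^(9/8) + (28/5)(t₁/2 - t₀/4)^(3/8))`. -/
theorem uniform_weighted_integral_bound (t₀ t₁ : ℝ) (ht₀ : 0 < t₀) (ht : t₀ < t₁)
    (t : ℝ) (htmem : t ∈ Set.Ioo (t₀ / 2) t₁) :
    (t - t₀ / 2) ^ ((1 : ℝ) / 2) *
        ∫ s in Set.Ioo (t₀ / 2) t,
          (1 + (t - s) ^ (-(3 : ℝ) / 4)) * (s - t₀ / 2) ^ (-(3 : ℝ) / 8)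
      ≤ Real.sqrt 2 * ((13 / 5) * (t₁ / 2 - t₀ / 4) ^ ((9 : ℝ) / 8)
          + (28 / 5) * (t₁ / 2 - t₀ / 4) ^ ((3 : ℝ) / 8)) := by
  obtain ⟨hta, htb⟩ := htmem
  set a := t₀ / 2 with ha_def
  set x := (t - a) / 2 with hx_def
  have hx : 0 < x := by rw [hx_def]; linarith
  set m := a + x with hm_def
  have ham : a < m := by rw [hm_def]; linarith
  have hmt : m < t := by rw [hm_def, hx_def]; linarith
  have hat : a < t := lt_trans ham hmt
  have htm : t - m = x := by rw [hm_def, hx_def]; ring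
  set f : ℝ → ℝ := fun s => (1 + (t - s) ^ (-(3 : ℝ) / 4)) * (s - a) ^ (-(3 : ℝ) / 8)
    with hf_def
  have hmeas : Measurable f := by
    apply Measurable.mul
    · exact measurable_const.add ((measurable_const.sub measurable_id).pow measurable_const)
    · exact (measurable_id.sub measurable_const).pow measurable_const
  set C1 : ℝ := 1 + x ^ (-(3 : ℝ) / 4) with hC1_def
  have hC1 : 0 ≤ C1 := by positivity
  -- integrability of the pure power pieces
  have hint_pow1 : IntervalIntegrable (fun s => (s - a) ^ (-(3 : ℝ) / 8)) volume a m := by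
    have h0 := intervalIntegral.intervalIntegrable_rpow'
      (a := 0) (b := m - a) (r := -(3 : ℝ) / 8) (by norm_num)
    simpa using h0.comp_sub_right a
  have hint_pow2 : IntervalIntegrable (fun s => (t - s) ^ (-(3 : ℝ) / 4)) volume m t := by
    have h0 := intervalIntegral.intervalIntegrable_rpow'
      (a := 0) (b := t - m) (r := -(3 : ℝ) / 4) (by norm_num)
    have := (h0.comp_sub_left t).symm
    simpa using this
  have hg1int : IntervalIntegrable (fun s => C1 * (s - a) ^ (-(3 : ℝ) / 8)) volume a m :=
    hint_pow1.const_mul C1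
  have hg2int : IntervalIntegrable
      (fun s => x ^ (-(3 : ℝ) / 8) * (1 + (t - s) ^ (-(3 : ℝ) / 4))) volume m t :=
    (intervalIntegrable_const.add hint_pow2).const_mul _
  -- pointwise bounds
  have hbound1 : ∀ s ∈ Set.Icc a m, f s ≤ C1 * (s - a) ^ (-(3 : ℝ) / 8) := by
    intro s hs
    apply mul_le_mul_of_nonneg_right _ (Real.rpow_nonneg (by linarith [hs.1]) _)
    apply add_le_add_right
    exact Real.rpow_le_rpow_of_nonpos hx (by linarith [hs.2]) (by norm_num)
  have hbound2 : ∀ s ∈ Set.Icc m t,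
      f s ≤ x ^ (-(3 : ℝ) / 8) * (1 + (t - s) ^ (-(3 : ℝ) / 4)) := by
    intro s hs
    have h1 : (0 : ℝ) ≤ 1 + (t - s) ^ (-(3 : ℝ) / 4) := by
      have : (0 : ℝ) ≤ (t - s) ^ (-(3 : ℝ) / 4) :=
        Real.rpow_nonneg (by linarith [hs.2]) _
      linarith
    have h2 : (s - a) ^ (-(3 : ℝ) / 8) ≤ x ^ (-(3 : ℝ) / 8) :=
      Real.rpow_le_rpow_of_nonpos hx (by linarith [hs.1, hm_def]) (by norm_num)
    calc f s = (1 + (t - s) ^ (-(3 : ℝ) / 4)) * (s - a) ^ (-(3 : ℝ) / 8) := rfl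
      _ ≤ (1 + (t - s) ^ (-(3 : ℝ) / 4)) * x ^ (-(3 : ℝ) / 8) :=
          mul_le_mul_of_nonneg_left h2 h1
      _ = x ^ (-(3 : ℝ) / 8) * (1 + (t - s) ^ (-(3 : ℝ) / 4)) := mul_comm _ _
  have hfnonneg : ∀ s, a ≤ s → s ≤ t → 0 ≤ f s := by
    intro s h1 h2
    apply mul_nonneg _ (Real.rpow_nonneg (by linarith) _)
    have : (0 : ℝ) ≤ (t - s) ^ (-(3 : ℝ) / 4) := Real.rpow_nonneg (by linarith) _
    linarith
  -- integrability of f on each piece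
  have hf1 : IntervalIntegrable f volume a m := by
    apply hg1int.mono_fun' (hmeas.aestronglyMeasurable.restrict)
    rw [Set.uIoc_of_le ham.le]
    filter_upwards [ae_restrict_mem measurableSet_Ioc] with s hs
    rw [Real.norm_of_nonneg (hfnonneg s hs.1.le (le_trans hs.2 hmt.le))]
    exact hbound1 s ⟨hs.1.le, hs.2⟩
  have hf2 : IntervalIntegrable f volume m t := by
    apply hg2int.mono_fun' (hmeas.aestronglyMeasurable.restrict)
    rw [Set.uIoc_of_le hmt.le]
    filter_upwards [ae_restrict_mem measurableSet_Ioc] with s hs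
    rw [Real.norm_of_nonneg (hfnonneg s (le_trans ham.le hs.1.le) hs.2)]
    exact hbound2 s ⟨hs.1.le, hs.2⟩
  -- compute the majorant integrals
  have hI1 : ∫ s in a..m, (s - a) ^ (-(3 : ℝ) / 8) = (8 / 5) * x ^ ((5 : ℝ) / 8) := by
    rw [intervalIntegral.integral_comp_sub_right (fun u => u ^ (-(3 : ℝ) / 8)) a]
    rw [integral_rpow (Or.inl (by norm_num))]
    have hma : m - a = x := by rw [hm_def]; ring
    rw [hma, sub_self, Real.zero_rpow (by norm_num)]
    norm_num
    ring
  have hI2 : ∫ s in m..t, (t - s) ^ (-(3 : ℝ) / 4) = 4 * x ^ ((1 : ℝ) / 4) := by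
    rw [intervalIntegral.integral_comp_sub_left (fun u => u ^ (-(3 : ℝ) / 4)) t]
    rw [sub_self, htm, integral_rpow (Or.inl (by norm_num))]
    rw [Real.zero_rpow (by norm_num)]
    norm_num
    ring
  -- rpow arithmetic
  have e1 : x ^ (-(3 : ℝ) / 4) * x ^ ((5 : ℝ) / 8) = x ^ (-(1 : ℝ) / 8) := by
    rw [← Real.rpow_add hx]; norm_num
  have e2 : x ^ (-(3 : ℝ) / 8) * x = x ^ ((5 : ℝ) / 8) := by
    nth_rewrite 2 [← Real.rpow_one x]
    rw [← Real.rpow_add hx]; norm_num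
  have e3 : x ^ (-(3 : ℝ) / 8) * x ^ ((1 : ℝ) / 4) = x ^ (-(1 : ℝ) / 8) := by
    rw [← Real.rpow_add hx]; norm_num
  -- the key integral bound
  have hI : (∫ s in Set.Ioo a t, f s)
      ≤ (13 / 5) * x ^ ((5 : ℝ) / 8) + (28 / 5) * x ^ (-(1 : ℝ) / 8) := by
    have hsplit : (∫ s in Set.Ioo a t, f s) = (∫ s in a..m, f s) + ∫ s in m..t, f s := by
      rw [← integral_Ioc_eq_integral_Ioo, ← intervalIntegral.integral_of_le hat.le]
      exact (intervalIntegral.integral_add_adjacent_intervals hf1 hf2).symm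
    rw [hsplit]
    have h1 : (∫ s in a..m, f s) ≤ C1 * ((8 / 5) * x ^ ((5 : ℝ) / 8)) := by
      calc (∫ s in a..m, f s) ≤ ∫ s in a..m, C1 * (s - a) ^ (-(3 : ℝ) / 8) :=
            intervalIntegral.integral_mono_on ham.le hf1 hg1int hbound1
        _ = C1 * ((8 / 5) * x ^ ((5 : ℝ) / 8)) := by
            rw [intervalIntegral.integral_const_mul, hI1]
    have h2 : (∫ s in m..t, f s) ≤ x ^ (-(3 : ℝ) / 8) * (x + 4 * x ^ ((1 : ℝ) / 4)) := by
      calc (∫ s in m..t, f s)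
          ≤ ∫ s in m..t, x ^ (-(3 : ℝ) / 8) * (1 + (t - s) ^ (-(3 : ℝ) / 4)) :=
            intervalIntegral.integral_mono_on hmt.le hf2 hg2int hbound2
        _ = x ^ (-(3 : ℝ) / 8) * (x + 4 * x ^ ((1 : ℝ) / 4)) := by
            rw [intervalIntegral.integral_const_mul,
              intervalIntegral.integral_add intervalIntegrable_const hint_pow2,
              intervalIntegral.integral_const, hI2, smul_eq_mul, mul_one, htm]
    have hexp : C1 * ((8 / 5) * x ^ ((5 : ℝ) / 8))
        + x ^ (-(3 : ℝ) / 8) * (x + 4 * x ^ ((1 : ℝ) / 4))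
        = (13 / 5) * x ^ ((5 : ℝ) / 8) + (28 / 5) * x ^ (-(1 : ℝ) / 8) := by
      rw [hC1_def]
      have expand : (1 + x ^ (-(3 : ℝ) / 4)) * ((8 / 5) * x ^ ((5 : ℝ) / 8))
          + x ^ (-(3 : ℝ) / 8) * (x + 4 * x ^ ((1 : ℝ) / 4))
          = (8 / 5) * x ^ ((5 : ℝ) / 8) + (8 / 5) * (x ^ (-(3 : ℝ) / 4) * x ^ ((5 : ℝ) / 8))
            + x ^ (-(3 : ℝ) / 8) * x + 4 * (x ^ (-(3 : ℝ) / 8) * x ^ ((1 : ℝ) / 4)) := by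
        ring
      rw [expand, e1, e2, e3]; ring
    linarith
  -- put everything together
  have hta2 : t - a = 2 * x := by rw [hx_def]; ring
  have hsq : (t - a) ^ ((1 : ℝ) / 2) = Real.sqrt 2 * x ^ ((1 : ℝ) / 2) := by
    rw [hta2, Real.mul_rpow (by norm_num) hx.le, Real.sqrt_eq_rpow]
  set X := t₁ / 2 - t₀ / 4 with hX_def
  have hxX : x ≤ X := by rw [hx_def, hX_def, ha_def]; linarith
  have f1 : x ^ ((1 : ℝ) / 2) * x ^ ((5 : ℝ) / 8) = x ^ ((9 : ℝ) / 8) := by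
    rw [← Real.rpow_add hx]; norm_num
  have f2 : x ^ ((1 : ℝ) / 2) * x ^ (-(1 : ℝ) / 8) = x ^ ((3 : ℝ) / 8) := by
    rw [← Real.rpow_add hx]; norm_num
  calc (t - a) ^ ((1 : ℝ) / 2) * ∫ s in Set.Ioo a t, f s
      ≤ (t - a) ^ ((1 : ℝ) / 2)
          * ((13 / 5) * x ^ ((5 : ℝ) / 8) + (28 / 5) * x ^ (-(1 : ℝ) / 8)) :=
        mul_le_mul_of_nonneg_left hI (Real.rpow_nonneg (by linarith) _)
    _ = Real.sqrt 2 * ((13 / 5) * x ^ ((9 : ℝ) / 8) + (28 / 5) * x ^ ((3 : ℝ) / 8)) := by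
        rw [hsq]
        have expand : Real.sqrt 2 * x ^ ((1 : ℝ) / 2)
            * ((13 / 5) * x ^ ((5 : ℝ) / 8) + (28 / 5) * x ^ (-(1 : ℝ) / 8))
            = Real.sqrt 2 * ((13 / 5) * (x ^ ((1 : ℝ) / 2) * x ^ ((5 : ℝ) / 8))
              + (28 / 5) * (x ^ ((1 : ℝ) / 2) * x ^ (-(1 : ℝ) / 8))) := by ring
        rw [expand, f1, f2]
    _ ≤ Real.sqrt 2 * ((13 / 5) * X ^ ((9 : ℝ) / 8) + (28 / 5) * X ^ ((3 : ℝ) / 8)) := by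
        gcongr <;> exact hx.le
end

section
/- Let a > 0, b > 0, θ > 0 and T > 0 be real numbers. Then there exists a constant C > 0, depending only on a, b, θ and T, such that every differentiable function y : (0,T) → ℝ with y(t) ≥ 0 for all t ∈ (0,T) and y'(t) ≤ -a * y(t)^{1+θ} + b for all t ∈ (0,T) satisfies y(t) ≤ C * t^{-1/θ} for all t ∈ (0,T). In particular, C does not depend on y (and hence not on any initial value of y). -/
open Set Real

/-- Initial-data-independent decay for ODEs with superlinear absorption:
for `a, b, θ, T > 0` there is `C > 0`, independent of `y`, such that every
differentiable nonnegative `y` on `(0,T)` with `y' ≤ -a y^(1+θ) + b` on `(0,T)`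
satisfies `y t ≤ C t^(-1/θ)` on `(0,T)`. -/
theorem superlinear_ode_decay (a b θ T : ℝ) (ha : 0 < a) (hb : 0 < b)
    (hθ : 0 < θ) (hT : 0 < T) :
    ∃ C : ℝ, 0 < C ∧ ∀ y : ℝ → ℝ,
      (∀ t ∈ Set.Ioo (0 : ℝ) T, DifferentiableAt ℝ y t) →
      (∀ t ∈ Set.Ioo (0 : ℝ) T, 0 ≤ y t) →
      (∀ t ∈ Set.Ioo (0 : ℝ) T, deriv y t ≤ -a * y t ^ (1 + θ) + b) →
      ∀ t ∈ Set.Ioo (0 : ℝ) T, y t ≤ C * t ^ (-1 / θ) := by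
  set c : ℝ := a * θ / 2 with hc
  have hc0 : 0 < c := by positivity
  set M : ℝ := (2 * b / a) ^ (1 / (1 + θ)) with hMdef
  have hM0 : 0 < M := rpow_pos_of_pos (by positivity) _
  have hMpow : M ^ (1 + θ) = 2 * b / a := by
    rw [hMdef, ← rpow_mul (by positivity), one_div,
      inv_mul_cancel₀ (by positivity : (1+θ) ≠ 0), rpow_one]
  refine ⟨max (M * T ^ (1 / θ)) (c ^ (-1 / θ)), lt_max_of_lt_left (by positivity), ?_⟩
  intro y hdiff hpos hode t₀ ht₀
  obtain ⟨ht₀0, ht₀T⟩ := ht₀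
  have ht0inv : (0:ℝ) < t₀ ^ (-1 / θ) := rpow_pos_of_pos ht₀0 _
  -- derivative bound where y > M
  have hkey : ∀ t ∈ Set.Ioo (0:ℝ) T, M < y t → deriv y t ≤ -(a/2) * y t ^ (1 + θ) := by
    intro t ht hMy
    have h1 := hode t ht
    have h2 : M ^ (1+θ) ≤ y t ^ (1+θ) := rpow_le_rpow hM0.le hMy.le (by positivity)
    rw [hMpow] at h2
    have : b ≤ (a/2) * y t ^ (1+θ) := by
      rw [div_le_iff₀ ha] at h2
      nlinarith
    nlinarith
  by_cases hcase : y t₀ ≤ M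
  · -- easy case
    have hTc : T ^ (-(1/θ)) ≤ t₀ ^ (-(1/θ)) :=
      rpow_le_rpow_of_nonpos ht₀0 ht₀T.le (neg_nonpos.mpr (by positivity))
    have : M = M * T ^ (1/θ) * T ^ (-(1/θ)) := by
      rw [mul_assoc, ← rpow_add hT, add_neg_cancel, rpow_zero, mul_one]
    calc y t₀ ≤ M := hcase
      _ = M * T ^ (1/θ) * T ^ (-(1/θ)) := this
      _ ≤ M * T ^ (1/θ) * t₀ ^ (-(1/θ)) := by
          apply mul_le_mul_of_nonneg_left hTc (by positivity)
      _ ≤ max (M * T ^ (1 / θ)) (c ^ (-1 / θ)) * t₀ ^ (-1/θ) := by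
          rw [neg_div]
          apply mul_le_mul_of_nonneg_right (le_max_left _ _)
          positivity
  push_neg at hcase
  -- y > M on (0, t₀]
  have hyM : ∀ s ∈ Set.Ioc (0:ℝ) t₀, M < y s := by
    intro s hs
    by_contra hle
    push_neg at hle
    obtain ⟨hs0, hst⟩ := hs
    have hsub : Icc s t₀ ⊆ Ioo 0 T := fun x hx => ⟨lt_of_lt_of_le hs0 hx.1, lt_of_le_of_lt hx.2 ht₀T⟩
    have hcontsub : ContinuousOn y (Icc s t₀) := fun x hx =>
      ((hdiff x (hsub hx)).continuousAt).continuousWithinAt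
    have hSc : IsClosed (Icc s t₀ ∩ y ⁻¹' Iic M) :=
      hcontsub.preimage_isClosed_of_isClosed isClosed_Icc isClosed_Iic
    have hSne : (Icc s t₀ ∩ y ⁻¹' Iic M).Nonempty := ⟨s, ⟨le_refl s, hst⟩, hle⟩
    have hSbd : BddAbove (Icc s t₀ ∩ y ⁻¹' Iic M) := ⟨t₀, fun x hx => hx.1.2⟩
    set u := sSup (Icc s t₀ ∩ y ⁻¹' Iic M) with hu
    have huS : u ∈ Icc s t₀ ∩ y ⁻¹' Iic M := hSc.csSup_mem hSne hSbd
    have hut : u < t₀ := lt_of_le_of_ne huS.1.2 (fun heq => absurd (heq ▸ huS.2) (not_le.mpr hcase))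
    have hbig : ∀ x ∈ Ioo u t₀, M < y x := by
      intro x hx
      by_contra hxle
      push_neg at hxle
      have : x ∈ Icc s t₀ ∩ y ⁻¹' Iic M := ⟨⟨le_trans huS.1.1 hx.1.le, hx.2.le⟩, hxle⟩
      exact absurd (le_csSup hSbd this) (not_le.mpr hx.1)
    have hanti : StrictAntiOn y (Icc u t₀) := by
      apply strictAntiOn_of_deriv_neg (convex_Icc u t₀)
      · exact hcontsub.mono (Icc_subset_Icc huS.1.1 le_rfl)
      · intro x hx
        rw [interior_Icc] at hx
        have hxI : x ∈ Ioo (0:ℝ) T := hsub ⟨le_trans huS.1.1 hx.1.le, hx.2.le⟩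
        have := hkey x hxI (hbig x hx)
        have hy0 : (0:ℝ) < y x := lt_trans hM0 (hbig x hx)
        have : -(a/2) * y x ^ (1+θ) < 0 := by
          have := rpow_pos_of_pos hy0 (1+θ)
          nlinarith
        linarith [hkey x hxI (hbig x hx)]
    have := hanti (left_mem_Icc.mpr hut.le) (right_mem_Icc.mpr hut.le) hut
    -- y t₀ < y u ≤ M, contradiction with hcase
    exact absurd (lt_of_lt_of_le this huS.2) (not_lt.mpr hcase.le)
  -- now mean value on g = y^(-θ)
  have hgt0 : ∀ s ∈ Set.Ioc (0:ℝ) t₀, 0 < y s := fun s hs => lt_trans hM0 (hyM s hs)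
  have hmain : ∀ s ∈ Set.Ioo (0:ℝ) t₀, c * (t₀ - s) ≤ y t₀ ^ (-θ) := by
    intro s hs
    set h : ℝ → ℝ := fun x => y x ^ (-θ) - c * x with hh
    have hIocsub : Icc s t₀ ⊆ Ioc 0 t₀ := fun x hx => ⟨lt_of_lt_of_le hs.1 hx.1, hx.2⟩
    have hIooT : Icc s t₀ ⊆ Ioo 0 T := fun x hx =>
      ⟨lt_of_lt_of_le hs.1 hx.1, lt_of_le_of_lt hx.2 ht₀T⟩
    have hder : ∀ x ∈ Icc s t₀, HasDerivAt h (deriv y x * (-θ) * y x ^ (-θ - 1) - c) x := by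
      intro x hx
      have hy0 : y x ≠ 0 := (hgt0 x (hIocsub hx)).ne'
      exact (((hdiff x (hIooT hx)).hasDerivAt).rpow_const (Or.inl hy0)).sub
        ((hasDerivAt_id x).const_mul c |>.congr_deriv (by ring))
    have hmono : MonotoneOn h (Icc s t₀) := by
      apply monotoneOn_of_deriv_nonneg (convex_Icc s t₀)
      · exact fun x hx => (hder x hx).continuousAt.continuousWithinAt
      · rw [interior_Icc]
        exact fun x hx => ((hder x (Ioo_subset_Icc_self hx)).differentiableAt).differentiableWithinAt
      · rw [interior_Icc]
        intro x hx
        have hxIcc := Ioo_subset_Icc_self hx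
        rw [(hder x hxIcc).deriv]
        have hy0 : 0 < y x := hgt0 x (hIocsub hxIcc)
        have hkx := hkey x (hIooT hxIcc) (hyM x (hIocsub hxIcc))
        have hp1 : (0:ℝ) < y x ^ (-θ - 1) := rpow_pos_of_pos hy0 _
        have hprod : y x ^ (-θ - 1) * y x ^ (1 + θ) = 1 := by
          have he : -θ - 1 + (1 + θ) = 0 := by ring
          rw [← rpow_add hy0, he, rpow_zero]
        have : deriv y x * (-θ) * y x ^ (-θ - 1) ≥ (a/2) * θ * (y x ^ (-θ-1) * y x ^ (1+θ)) := by
          have := mul_le_mul_of_nonneg_right hkx hp1.le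
          nlinarith
        rw [hprod] at this
        have : c ≤ deriv y x * (-θ) * y x ^ (-θ - 1) := by
          rw [hc]; nlinarith
        linarith
    have := hmono ⟨le_rfl, hs.2.le⟩ ⟨hs.2.le, le_rfl⟩ hs.2.le
    simp only [hh] at this
    have hgs : 0 < y s ^ (-θ) := rpow_pos_of_pos (hgt0 s ⟨hs.1, hs.2.le⟩) _
    nlinarith
  have hfin : c * t₀ ≤ y t₀ ^ (-θ) := by
    by_contra hlt
    push_neg at hlt
    set ε := (c * t₀ - y t₀ ^ (-θ)) / c with hε
    have hε0 : 0 < ε := div_pos (by linarith) hc0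
    have hs0 : 0 < min (ε/2) (t₀/2) := lt_min (by positivity) (by linarith)
    have hst : min (ε/2) (t₀/2) < t₀ := lt_of_le_of_lt (min_le_right _ _) (by linarith)
    have h1 := hmain _ ⟨hs0, hst⟩
    have h2 : min (ε/2) (t₀/2) ≤ ε/2 := min_le_left _ _
    have hεc : c * ε = c * t₀ - y t₀ ^ (-θ) := by
      rw [hε]; field_simp
    nlinarith
  -- conclude
  have hy0 : 0 < y t₀ := hgt0 t₀ ⟨ht₀0, le_rfl⟩
  have hct : 0 < c * t₀ := by positivity
  have h1 : (y t₀ ^ (-θ)) ^ (-1/θ) ≤ (c * t₀) ^ (-1/θ) :=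
    rpow_le_rpow_of_nonpos hct hfin (by rw [neg_div]; exact neg_nonpos.mpr (by positivity))
  rw [← rpow_mul hy0.le] at h1
  have : -θ * (-1/θ) = 1 := by field_simp
  rw [this, rpow_one] at h1
  have h2 : (c * t₀) ^ (-1/θ) = c ^ (-1/θ) * t₀ ^ (-1/θ) := mul_rpow hc0.le ht₀0.le
  calc y t₀ ≤ (c * t₀) ^ (-1/θ) := h1
    _ = c ^ (-1/θ) * t₀ ^ (-1/θ) := h2
    _ ≤ max (M * T ^ (1 / θ)) (c ^ (-1 / θ)) * t₀ ^ (-1/θ) :=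
        mul_le_mul_of_nonneg_right (le_max_right _ _) ht0inv.le
end
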